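/- Let G = A ⋊ Z be a semidirect product of pro-p groups where Z ≅ Z_p^d is abelian, A acts on Z through a character θ: A → 1 + p^k Z_p ⊆ Z_p^× (i.e., a·z·a^{-1} = z^{θ(a)}), and k ≥ 1 (k ≥ 2 if p = 2). Then Z is contained in the θ̃-centre of G, where θ̃: G → Z_p^× extends θ trivially on Z; moreover Z_θ̃(G) = Z_θ(A) × Z. -/

import Mathlib

/-- Cyclotomic fibre products enlarge the θ-centre.  Let `G = Z ⋊ A` be a
semidirect product of pro-`p` groups with `Z ≅ ℤ_p^d` abelian, where `A` acts on
`Z` through a character `θ : A → 1 + p^k ℤ_p ⊆ ℤ_pˣ` (`a z a⁻¹ = z^{θ a}`,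
i.e. `φ a z = θ a • z`), with `k ≥ 1` (`k ≥ 2` if `p = 2`).  Write `θ̃` for the
extension of `θ` to `G` trivial on `Z`, and let `PA` denote the `p`-adic power map
on `A` (extending integral powers).  Then:
* `Z` is contained in the `θ̃`-centre of `G`, i.e. every `z ∈ Z` lies in `ker θ̃`
  and satisfies `g z g⁻¹ = z^{θ̃ g}` for all `g ∈ G`; and
* `Z_{θ̃}(G) = Z_θ(A) × Z`: an element `h = (z, a)` of `G` lies in the `θ̃`-centre
  (meaning `θ̃ h = 1` and `g h g⁻¹ = h^{θ̃ g}` for all `g`) if and only if its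
  `A`-component `a` lies in the `θ`-centre of `A`. -/
theorem stmt_17 (p : ℕ) [Fact p.Prime] (d k : ℕ) (hk : 1 ≤ k)
    (hk2 : p = 2 → 2 ≤ k)
    {A : Type*} [Group A] (θ : A →* ℤ_[p]ˣ)
    (hθ : ∀ a : A, ∃ c : ℤ_[p], ((θ a : ℤ_[p])) = 1 + (p : ℤ_[p]) ^ k * c)
    (φ : A →* MulAut (Multiplicative (Fin d → ℤ_[p])))
    (hφ : ∀ (a : A) (z : Multiplicative (Fin d → ℤ_[p])),
      φ a z = Multiplicative.ofAdd (((θ a : ℤ_[p])) • Multiplicative.toAdd z))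
    (PA : A → ℤ_[p] → A)
    (hPAint : ∀ (a : A) (n : ℤ), PA a ((n : ℤ_[p])) = a ^ n)
    (hPAadd : ∀ (a : A) (c c' : ℤ_[p]), PA a (c + c') = PA a c * PA a c')
    (hPA1 : ∀ c : ℤ_[p], PA 1 c = 1) :
    (∀ z : Multiplicative (Fin d → ℤ_[p]),
      θ ((SemidirectProduct.inl z : Multiplicative (Fin d → ℤ_[p]) ⋊[φ] A).right) = 1 ∧
      ∀ g : Multiplicative (Fin d → ℤ_[p]) ⋊[φ] A,
        g * SemidirectProduct.inl z * g⁻¹ =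
          SemidirectProduct.inl
            (Multiplicative.ofAdd (((θ g.right : ℤ_[p])) • Multiplicative.toAdd z)))
    ∧
    (∀ h : Multiplicative (Fin d → ℤ_[p]) ⋊[φ] A,
      (θ h.right = 1 ∧
        ∀ g : Multiplicative (Fin d → ℤ_[p]) ⋊[φ] A,
          g * h * g⁻¹ =
            ⟨Multiplicative.ofAdd (((θ g.right : ℤ_[p])) • Multiplicative.toAdd h.left),
              PA h.right ((θ g.right : ℤ_[p]))⟩)
      ↔
      (θ h.right = 1 ∧ ∀ b : A, b * h.right * b⁻¹ = PA h.right ((θ b : ℤ_[p])))) := by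

  constructor
  · intro z
    constructor
    · simp
    · intro g
      ext
      · simp only [SemidirectProduct.mul_left, SemidirectProduct.mul_right,
          SemidirectProduct.inv_left, SemidirectProduct.inv_right,
          SemidirectProduct.left_inl, SemidirectProduct.right_inl, mul_one,
          map_mul, map_inv, MulAut.apply_inv_self]
        rw [hφ]
        simp [mul_comm]
      · simp
  · intro h
    constructor
    · rintro ⟨h1, h2⟩
      refine ⟨h1, fun b => ?_⟩
      have := congrArg SemidirectProduct.right (h2 (SemidirectProduct.inr b))
      simpa using this
    · rintro ⟨h1, h2⟩
      refine ⟨h1, fun g => ?_⟩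
      ext
      · simp only [SemidirectProduct.mul_left, SemidirectProduct.mul_right,
          SemidirectProduct.inv_left, SemidirectProduct.inv_right,
          map_mul, map_inv, MulAut.mul_apply]
        rw [hφ g.right h.left]
        have key : (φ g.right) ((φ h.right) ((φ g.right)⁻¹ g.left)) = g.left := by
          have : (φ g.right) ((φ h.right) ((φ g.right)⁻¹ g.left))
              = φ (g.right * h.right * g.right⁻¹) g.left := by
            simp [map_mul, map_inv, MulAut.mul_apply]
          rw [this, hφ]
          have hθ1 : ((θ (g.right * h.right * g.right⁻¹) : ℤ_[p])) = 1 := by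
            simp [map_mul, h1]
          rw [hθ1, one_smul]
          simp
        rw [key, mul_comm g.left, mul_assoc]
        simp
      · simp only [SemidirectProduct.mul_right, SemidirectProduct.inv_right]
        rw [← h2 g.right]
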